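/- Let L be a Lie algebra over a field, with universal Lie pairings h: L × L → L⊗L and h̄: (L/L²) × (L/L²) → (L/L²)⊗(L/L²), and let π: L⊗L → (L/L²)⊗(L/L²) be the natural epimorphism. Then Ker π = L⊗L² + L²⊗L, where L⊗L² denotes the submodule of L⊗L spanned by {l⊗m : l ∈ L, m ∈ L²} and L²⊗L the submodule spanned by {m⊗l : m ∈ L², l ∈ L}; moreover L⊗L² + L²⊗L = L⊗L². -/

import Mathlib

universe u v w x

universe t

section ShrinkLie

namespace ShrinkLie

variable {V : Type w} [LieRing V]

noncomputable instance [Small.{t} V] : Bracket (Shrink.{t} V) (Shrink.{t} V) :=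
  ⟨fun a b => equivShrink V ⁅(equivShrink V).symm a, (equivShrink V).symm b⁆⟩

lemma bracket_def [Small.{t} V] (a b : Shrink.{t} V) :
    ⁅a, b⁆ = equivShrink V ⁅(equivShrink V).symm a, (equivShrink V).symm b⁆ := rfl

noncomputable instance [Small.{t} V] : LieRing (Shrink.{t} V) where
  add_lie a b c := by
    simp only [bracket_def, equivShrink_symm_add, add_lie, equivShrink_add]
  lie_add a b c := by
    simp only [bracket_def, equivShrink_symm_add, lie_add, equivShrink_add]
  lie_self a := by
    simp only [bracket_def, lie_self]
    rw [← equivShrink_symm_zero (α := V), Equiv.apply_symm_apply]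
  leibniz_lie a b c := by
    simp only [bracket_def, Equiv.symm_apply_apply, ← equivShrink_add]
    exact congrArg _ (leibniz_lie _ _ _)

variable (F : Type u) [CommRing F] [LieAlgebra F V]

noncomputable instance [Small.{t} V] : LieAlgebra F (Shrink.{t} V) where
  lie_smul c a b := by
    simp only [bracket_def, equivShrink_symm_smul, lie_smul, equivShrink_smul]

/-- `Shrink` as a Lie algebra equivalence. -/
noncomputable def lieEquiv [Small.{t} V] : V ≃ₗ⁅F⁆ Shrink.{t} V :=
  { toLieHom :=
      { toFun := equivShrink V
        map_add' := fun a b => equivShrink_add a b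
        map_smul' := fun c a => equivShrink_smul c a
        map_lie' := by
          intro a b
          simp only [bracket_def, Equiv.symm_apply_apply] }
    invFun := (equivShrink V).symm
    left_inv := (equivShrink V).symm_apply_apply
    right_inv := (equivShrink V).apply_symm_apply }

@[simp] lemma lieEquiv_apply [Small.{t} V] (a : V) : lieEquiv F a = equivShrink V a := rfl

end ShrinkLie

end ShrinkLie


/-- A Lie pairing `ρ : L × L → H` of Lie algebras over a field `F`:
a bilinear map satisfying the three Lie-pairing relations. -/
structure IsLiePairing (F : Type u) [Field F] {L : Type v} {H : Type w}
    [LieRing L] [LieAlgebra F L] [LieRing H] [LieAlgebra F H]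
    (ρ : L → L → H) : Prop where
  add_left : ∀ l l' k : L, ρ (l + l') k = ρ l k + ρ l' k
  add_right : ∀ l k k' : L, ρ l (k + k') = ρ l k + ρ l k'
  smul_left : ∀ (c : F) (l k : L), ρ (c • l) k = c • ρ l k
  smul_right : ∀ (c : F) (l k : L), ρ l (c • k) = c • ρ l k
  bracket_left : ∀ l l' s : L, ρ ⁅l, l'⁆ s = ρ l ⁅l', s⁆ - ρ l' ⁅l, s⁆
  bracket_right : ∀ l s s' : L, ρ l ⁅s, s'⁆ = ρ ⁅s', l⁆ s - ρ ⁅s, l⁆ s'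
  bracket_bracket : ∀ l s l' s' : L, ρ ⁅l, s⁆ ⁅l', s'⁆ = -⁅ρ s l, ρ l' s'⁆

lemma IsLiePairing.compHom {F : Type u} [Field F] {L : Type v} {H : Type w} {H' : Type x}
    [LieRing L] [LieAlgebra F L] [LieRing H] [LieAlgebra F H]
    [LieRing H'] [LieAlgebra F H'] {ρ : L → L → H} (hρ : IsLiePairing F ρ)
    (f : H →ₗ⁅F⁆ H') : IsLiePairing F (fun a b => f (ρ a b)) := by
  constructor
  · intro l l' k; rw [hρ.add_left, map_add f]
  · intro l k k'; rw [hρ.add_right, map_add f]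
  · intro c l k; rw [hρ.smul_left, map_smul f]
  · intro c l k; rw [hρ.smul_right, map_smul f]
  · intro l l' s; rw [hρ.bracket_left, map_sub f]
  · intro l s s'; rw [hρ.bracket_right, map_sub f]
  · intro l s l' s'; rw [hρ.bracket_bracket, map_neg f, f.map_lie]

lemma small_of_spanning {F : Type u} {V : Type w} {ι : Type v} [Field F] [AddCommGroup V]
    [Module F V] [Small.{t} F] [Small.{t} ι] (f : ι → V)
    (hf : Submodule.span F (Set.range f) = ⊤) : Small.{t} V := by
  haveI : Small.{t} (ι →₀ F) :=
    small_of_injective (f := fun p => (p : ι → F)) DFunLike.coe_injective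
  exact small_of_surjective (f := Finsupp.linearCombination F f)
    (LinearMap.range_eq_top.mp (by rw [Finsupp.range_linearCombination, hf]))

/-- `h : L × L → T` is a universal Lie pairing: `T` plays the role of the
nonabelian tensor square `L ⊗ L`, with `h l l' = l ⊗ l'`. -/
structure IsUniversalLiePairing (F : Type u) [Field F] (L : Type v) (T : Type w)
    [LieRing L] [LieAlgebra F L] [LieRing T] [LieAlgebra F T]
    (h : L → L → T) : Prop where
  isLiePairing : IsLiePairing F h
  universal : ∀ (Q : Type (max u v w)) [LieRing Q] [LieAlgebra F Q]
      (h' : L → L → Q), IsLiePairing F h' →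
        ∃! ζ : T →ₗ⁅F⁆ Q, ∀ x y : L, ζ (h x y) = h' x y

/-- For the natural epimorphism `π : L⊗L → (L/L²)⊗(L/L²)` one has
`Ker π = L⊗L² + L²⊗L`, and moreover `L⊗L² + L²⊗L = L⊗L²`, where `L⊗L²`
(resp. `L²⊗L`) is the submodule of `L⊗L` spanned by the `l⊗m` (resp. `m⊗l`)
with `m ∈ L²`. -/
theorem ker_natural_epimorphism (F : Type u) [Field F]
    (L : Type v) [LieRing L] [LieAlgebra F L]
    (T : Type w) [LieRing T] [LieAlgebra F T]
    (h : L → L → T) (hh : IsUniversalLiePairing F L T h)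
    (T2 : Type x) [LieRing T2] [LieAlgebra F T2]
    (h2 : (L ⧸ ⁅(⊤ : LieIdeal F L), (⊤ : LieIdeal F L)⁆) →
      (L ⧸ ⁅(⊤ : LieIdeal F L), (⊤ : LieIdeal F L)⁆) → T2)
    (hh2 : IsUniversalLiePairing F
      (L ⧸ ⁅(⊤ : LieIdeal F L), (⊤ : LieIdeal F L)⁆) T2 h2)
    (π : T →ₗ⁅F⁆ T2)
    (hπ : ∀ l l' : L, π (h l l') =
      h2 (LieSubmodule.Quotient.mk (N := ⁅(⊤ : LieIdeal F L), (⊤ : LieIdeal F L)⁆) l)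
         (LieSubmodule.Quotient.mk (N := ⁅(⊤ : LieIdeal F L), (⊤ : LieIdeal F L)⁆) l')) :
    (π.ker : Submodule F T) =
        Submodule.span F
          {z : T | ∃ l m : L, m ∈ ⁅(⊤ : LieIdeal F L), (⊤ : LieIdeal F L)⁆ ∧ z = h l m} ⊔
        Submodule.span F
          {z : T | ∃ m l : L, m ∈ ⁅(⊤ : LieIdeal F L), (⊤ : LieIdeal F L)⁆ ∧ z = h m l} ∧
      Submodule.span F
          {z : T | ∃ l m : L, m ∈ ⁅(⊤ : LieIdeal F L), (⊤ : LieIdeal F L)⁆ ∧ z = h l m} ⊔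
        Submodule.span F
          {z : T | ∃ m l : L, m ∈ ⁅(⊤ : LieIdeal F L), (⊤ : LieIdeal F L)⁆ ∧ z = h m l} =
      Submodule.span F
          {z : T | ∃ l m : L, m ∈ ⁅(⊤ : LieIdeal F L), (⊤ : LieIdeal F L)⁆ ∧ z = h l m} := by
  classical
  obtain ⟨hp, huniv⟩ := hh
  obtain ⟨hp2, huniv2⟩ := hh2
  let L2 : LieIdeal F L := ⁅(⊤ : LieIdeal F L), (⊤ : LieIdeal F L)⁆
  let sA : Set T := {z : T | ∃ l m : L, m ∈ L2 ∧ z = h l m}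
  let sB : Set T := {z : T | ∃ m l : L, m ∈ L2 ∧ z = h m l}
  let A : Submodule F T := Submodule.span F sA
  let B : Submodule F T := Submodule.span F sB
  -- basic vanishing facts
  have h0l : ∀ l : L, h 0 l = 0 := fun l => by
    have := hp.smul_left 0 0 l; rwa [zero_smul, zero_smul] at this
  have h2x0 : ∀ a, h2 a 0 = 0 := fun a => by
    have := hp2.smul_right 0 a 0; rwa [zero_smul, zero_smul] at this
  -- B ≤ A on generators
  have hBA : ∀ m ∈ L2, ∀ l : L, h m l ∈ A := by
    intro m hm l
    have hm' : m ∈ Submodule.span F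
        {z : L | ∃ a ∈ (⊤ : LieIdeal F L), ∃ b ∈ (⊤ : LieIdeal F L), ⁅a, b⁆ = z} := by
      rw [← LieSubmodule.lieIdeal_oper_eq_linear_span']
      exact Iff.mpr (LieSubmodule.mem_toSubmodule _) hm
    refine Submodule.span_induction ?_ ?_ ?_ ?_ hm' (p := fun m _ => h m l ∈ A)
    · rintro z ⟨a, -, b, -, rfl⟩
      rw [hp.bracket_left a b l]
      exact sub_mem
        (Submodule.subset_span ⟨a, ⁅b, l⁆,
          LieSubmodule.lie_mem_lie (LieSubmodule.mem_top b) (LieSubmodule.mem_top l), rfl⟩)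
        (Submodule.subset_span ⟨b, ⁅a, l⁆,
          LieSubmodule.lie_mem_lie (LieSubmodule.mem_top a) (LieSubmodule.mem_top l), rfl⟩)
    · show h 0 l ∈ A; rw [h0l]; exact zero_mem _
    · intro y z _ _ hy hz; show h (y + z) l ∈ A
      rw [hp.add_left]; exact add_mem hy hz
    · intro c y _ hy; show h (c • y) l ∈ A
      rw [hp.smul_left]; exact Submodule.smul_mem _ c hy
  -- the image of h spans T
  let Rset : Set T := {z : T | ∃ a b : L, z = h a b}
  have hbb : ∀ a b c d : L, ⁅h a b, h c d⁆ = -h ⁅b, a⁆ ⁅c, d⁆ := by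
    intro a b c d
    rw [hp.bracket_bracket b a c d, neg_neg]
  have hsurj : ∀ s : T, s ∈ Submodule.span F Rset := by
    have hlie : ∀ y ∈ Submodule.span F Rset, ∀ z ∈ Submodule.span F Rset,
        ⁅y, z⁆ ∈ Submodule.span F Rset := by
      intro y hy
      refine Submodule.span_induction ?_ ?_ ?_ ?_ hy
        (p := fun y _ => ∀ z ∈ Submodule.span F Rset, ⁅y, z⁆ ∈ Submodule.span F Rset)
      · rintro y ⟨a, b, rfl⟩ z hz
        refine Submodule.span_induction ?_ ?_ ?_ ?_ hz
          (p := fun z _ => ⁅h a b, z⁆ ∈ Submodule.span F Rset)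
        · rintro z ⟨c, d, rfl⟩
          show ⁅h a b, h c d⁆ ∈ Submodule.span F Rset
          rw [hbb]
          exact neg_mem (Submodule.subset_span ⟨⁅b, a⁆, ⁅c, d⁆, rfl⟩)
        · show ⁅h a b, (0 : T)⁆ ∈ Submodule.span F Rset
          rw [lie_zero]; exact zero_mem _
        · intro p q _ _ hpq hq; show ⁅h a b, p + q⁆ ∈ Submodule.span F Rset
          rw [lie_add]; exact add_mem hpq hq
        · intro c p _ hp'; show ⁅h a b, c • p⁆ ∈ Submodule.span F Rset
          rw [lie_smul]; exact Submodule.smul_mem _ c hp'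
      · intro z hz; show ⁅(0 : T), z⁆ ∈ Submodule.span F Rset
        rw [zero_lie]; exact zero_mem _
      · intro p q _ _ hpz hqz z hz
        show ⁅p + q, z⁆ ∈ Submodule.span F Rset
        rw [add_lie]; exact add_mem (hpz z hz) (hqz z hz)
      · intro c p _ hpz z hz
        show ⁅c • p, z⁆ ∈ Submodule.span F Rset
        rw [smul_lie]; exact Submodule.smul_mem _ c (hpz z hz)
    let S : LieSubalgebra F T :=
      { Submodule.span F Rset with
        lie_mem' := fun {y z} hy hz => hlie y hy z hz }
    let h' : L → L → S := fun a b => ⟨h a b, Submodule.subset_span ⟨a, b, rfl⟩⟩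
    have hp' : IsLiePairing F h' := by
      constructor
      · intro l l' k; exact Subtype.ext (hp.add_left l l' k)
      · intro l k k'; exact Subtype.ext (hp.add_right l k k')
      · intro c l k; exact Subtype.ext (hp.smul_left c l k)
      · intro c l k; exact Subtype.ext (hp.smul_right c l k)
      · intro l l' s; exact Subtype.ext (hp.bracket_left l l' s)
      · intro l s s'; exact Subtype.ext (hp.bracket_right l s s')
      · intro l s l' s'; exact Subtype.ext (hp.bracket_bracket l s l' s')
    let eS : S ≃ₗ⁅F⁆ Shrink.{max u v w} S := ShrinkLie.lieEquiv F
    let eT : T ≃ₗ⁅F⁆ Shrink.{max u v w} T := ShrinkLie.lieEquiv F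
    obtain ⟨ζ, hζ, -⟩ := huniv (Shrink.{max u v w} S)
      (fun a b => eS.toLieHom (h' a b)) (hp'.compHom eS.toLieHom)
    obtain ⟨θ, hθ, hθuniq⟩ := huniv (Shrink.{max u v w} T)
      (fun a b => eT.toLieHom (h a b)) (hp.compHom eT.toLieHom)
    have e1 : eT.toLieHom = θ := hθuniq eT.toLieHom fun a b => rfl
    let ξ : T →ₗ⁅F⁆ T := S.incl.comp (eS.symm.toLieHom.comp ζ)
    have e2 : eT.toLieHom.comp ξ = θ := by
      refine hθuniq _ fun a b => ?_
      show eT (S.incl (eS.symm (ζ (h a b)))) = eT (h a b)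
      rw [hζ]
      show eT (S.incl (eS.symm (eS (h' a b)))) = eT (h a b)
      rw [LieEquiv.symm_apply_apply]
      rfl
    intro s
    have h12 : eT.toLieHom = eT.toLieHom.comp ξ := e1.trans e2.symm
    have he : eT.toLieHom s = eT.toLieHom (ξ s) := DFunLike.congr_fun h12 s
    have hs : s = ξ s := eT.injective he
    rw [hs]
    exact (eS.symm (ζ s)).2
  -- A is a Lie ideal
  have hIlie : ∀ {y z : T}, z ∈ A → ⁅y, z⁆ ∈ A := by
    have key : ∀ z ∈ A, ∀ y ∈ Submodule.span F Rset, ⁅y, z⁆ ∈ A := by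
      intro z hz
      refine Submodule.span_induction ?_ ?_ ?_ ?_ hz
        (p := fun z _ => ∀ y ∈ Submodule.span F Rset, ⁅y, z⁆ ∈ A)
      · rintro z ⟨l, m, hm, rfl⟩ y hy
        refine Submodule.span_induction ?_ ?_ ?_ ?_ hy
          (p := fun y _ => ⁅y, h l m⁆ ∈ A)
        · rintro y ⟨p, q, rfl⟩
          show ⁅h p q, h l m⁆ ∈ A
          rw [hbb]
          exact neg_mem (Submodule.subset_span ⟨⁅q, p⁆, ⁅l, m⁆,
            LieSubmodule.lie_mem_lie (LieSubmodule.mem_top l) (LieSubmodule.mem_top m), rfl⟩)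
        · show ⁅(0 : T), h l m⁆ ∈ A; rw [zero_lie]; exact zero_mem _
        · intro p q _ _ hpm hqm; show ⁅p + q, h l m⁆ ∈ A
          rw [add_lie]; exact add_mem hpm hqm
        · intro c p _ hpm; show ⁅c • p, h l m⁆ ∈ A
          rw [smul_lie]; exact Submodule.smul_mem _ c hpm
      · intro y hy; show ⁅y, (0 : T)⁆ ∈ A; rw [lie_zero]; exact zero_mem _
      · intro p q _ _ hpz hqz y hy; show ⁅y, p + q⁆ ∈ A
        rw [lie_add]; exact add_mem (hpz y hy) (hqz y hy)
      · intro c p _ hpz y hy; show ⁅y, c • p⁆ ∈ A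
        rw [lie_smul]; exact Submodule.smul_mem _ c (hpz y hy)
    intro y z hz
    exact key z hz y (hsurj y)
  let I : LieIdeal F T := { A with lie_mem := fun {y z} hz => hIlie hz }
  let mkI : T →ₗ[F] T ⧸ I := (I : Submodule F T).mkQ
  -- descend h to a pairing on the quotients
  let bh : L →ₗ[F] L →ₗ[F] T :=
    LinearMap.mk₂ F h hp.add_left hp.smul_left hp.add_right hp.smul_right
  let g : L →ₗ[F] L →ₗ[F] T ⧸ I := bh.compr₂ mkI
  have hgker : ∀ m ∈ L2, g m = 0 := by
    intro m hm
    apply LinearMap.ext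
    intro l
    show mkI (h m l) = 0
    exact (Submodule.Quotient.mk_eq_zero _).mpr (hBA m hm l)
  let g1 : (L ⧸ L2) →ₗ[F] L →ₗ[F] T ⧸ I :=
    Submodule.liftQ L2.toSubmodule g fun m hm => by
      rw [LinearMap.mem_ker]; exact hgker m hm
  let g2 : (L ⧸ L2) →ₗ[F] (L ⧸ L2) →ₗ[F] T ⧸ I :=
    Submodule.liftQ L2.toSubmodule g1.flip fun m hm => by
      rw [LinearMap.mem_ker]
      apply LinearMap.ext
      intro a
      obtain ⟨y, rfl⟩ := Submodule.Quotient.mk_surjective L2.toSubmodule a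
      show mkI (h y m) = 0
      exact (Submodule.Quotient.mk_eq_zero _).mpr (Submodule.subset_span ⟨y, m, hm, rfl⟩)
  let ρ : (L ⧸ L2) → (L ⧸ L2) → T ⧸ I := fun a b => g2 b a
  have hk : ∀ a b : L,
      ρ (Submodule.Quotient.mk a) (Submodule.Quotient.mk b) = mkI (h a b) := by
    intro a b
    rfl
  have hmkbr : ∀ p q : T, mkI ⁅p, q⁆ = ⁅mkI p, mkI q⁆ := fun p q =>
    LieSubmodule.Quotient.mk_bracket I p q
  have hρp : IsLiePairing F ρ := by
    constructor
    · intro a b k; exact (g2 k).map_add a b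
    · intro a k k'
      show g2 (k + k') a = g2 k a + g2 k' a
      rw [g2.map_add]; rfl
    · intro c a k; exact (g2 k).map_smul c a
    · intro c a k
      show g2 (c • k) a = c • g2 k a
      rw [g2.map_smul]; rfl
    · intro a b s
      obtain ⟨a, rfl⟩ := Submodule.Quotient.mk_surjective L2.toSubmodule a
      obtain ⟨b, rfl⟩ := Submodule.Quotient.mk_surjective L2.toSubmodule b
      obtain ⟨s, rfl⟩ := Submodule.Quotient.mk_surjective L2.toSubmodule s
      rw [← LieSubmodule.Quotient.mk_bracket, ← LieSubmodule.Quotient.mk_bracket,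
        ← LieSubmodule.Quotient.mk_bracket]
      rw [hk, hk, hk, ← map_sub mkI, hp.bracket_left]
    · intro a s s'
      obtain ⟨a, rfl⟩ := Submodule.Quotient.mk_surjective L2.toSubmodule a
      obtain ⟨s, rfl⟩ := Submodule.Quotient.mk_surjective L2.toSubmodule s
      obtain ⟨s', rfl⟩ := Submodule.Quotient.mk_surjective L2.toSubmodule s'
      rw [← LieSubmodule.Quotient.mk_bracket, ← LieSubmodule.Quotient.mk_bracket,
        ← LieSubmodule.Quotient.mk_bracket]
      rw [hk, hk, hk, ← map_sub mkI, hp.bracket_right]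
    · intro a s a' s'
      obtain ⟨a, rfl⟩ := Submodule.Quotient.mk_surjective L2.toSubmodule a
      obtain ⟨s, rfl⟩ := Submodule.Quotient.mk_surjective L2.toSubmodule s
      obtain ⟨a', rfl⟩ := Submodule.Quotient.mk_surjective L2.toSubmodule a'
      obtain ⟨s', rfl⟩ := Submodule.Quotient.mk_surjective L2.toSubmodule s'
      rw [← LieSubmodule.Quotient.mk_bracket, ← LieSubmodule.Quotient.mk_bracket]
      rw [hk, hk, hk, hp.bracket_bracket, map_neg mkI, hmkbr]
  -- the quotient is small
  haveI hsmall : Small.{max u v x} (T ⧸ I) := by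
    refine small_of_spanning (F := F) (ι := L × L) (fun p => mkI (h p.1 p.2)) ?_
    rw [eq_top_iff]
    rintro q -
    obtain ⟨s, rfl⟩ := Submodule.Quotient.mk_surjective _ q
    have hmem : mkI s ∈ Submodule.map mkI (Submodule.span F Rset) :=
      Submodule.mem_map_of_mem (hsurj s)
    rw [Submodule.map_span] at hmem
    have hsub : mkI '' Rset ⊆ Set.range fun p : L × L => mkI (h p.1 p.2) := by
      rintro _ ⟨_, ⟨a, b, rfl⟩, rfl⟩
      exact ⟨(a, b), rfl⟩
    exact Submodule.span_mono hsub hmem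
  let eQ : (T ⧸ I) ≃ₗ⁅F⁆ Shrink.{max u v x} (T ⧸ I) := ShrinkLie.lieEquiv F
  obtain ⟨ζ2, hζ2, -⟩ := huniv2 (Shrink.{max u v x} (T ⧸ I))
    (fun a b => eQ.toLieHom (ρ a b)) (hρp.compHom eQ.toLieHom)
  -- kernel inclusion
  have hkerle : (π.ker : Submodule F T) ≤ A ⊔ B := by
    intro s hs
    have hπs : π s = 0 := LieHom.mem_ker.mp (Iff.mp (LieSubmodule.mem_toSubmodule _) hs)
    have hkey : ∀ z ∈ Submodule.span F Rset, ζ2 (π z) = eQ.toLieHom (mkI z) := by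
      intro z hz
      refine Submodule.span_induction ?_ ?_ ?_ ?_ hz
        (p := fun z _ => ζ2 (π z) = eQ.toLieHom (mkI z))
      · rintro z ⟨a, b, rfl⟩
        show ζ2 (π (h a b)) = eQ.toLieHom (mkI (h a b))
        rw [hπ a b, hζ2]
        show eQ.toLieHom (ρ (Submodule.Quotient.mk a) (Submodule.Quotient.mk b)) = _
        rw [hk]
      · show ζ2 (π 0) = eQ.toLieHom (mkI 0)
        rw [map_zero π, map_zero ζ2, map_zero mkI, map_zero eQ.toLieHom]
      · intro p q _ _ hpz hqz
        show ζ2 (π (p + q)) = eQ.toLieHom (mkI (p + q))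
        rw [map_add π, map_add ζ2, map_add mkI, map_add eQ.toLieHom, hpz, hqz]
      · intro c p _ hpz
        show ζ2 (π (c • p)) = eQ.toLieHom (mkI (c • p))
        rw [map_smul π, map_smul ζ2, map_smul mkI, map_smul eQ.toLieHom, hpz]
    have h0 : ζ2 (π s) = eQ.toLieHom (mkI s) := hkey s (hsurj s)
    rw [hπs, map_zero ζ2] at h0
    have hmk : mkI s = 0 := by
      have h0' : eQ.toLieHom (mkI s) = eQ.toLieHom 0 := by
        rw [map_zero eQ.toLieHom]; exact h0.symm
      exact eQ.injective h0'
    have hsA' : s ∈ A := (Submodule.Quotient.mk_eq_zero _).mp hmk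
    exact Submodule.mem_sup_left hsA'
  have hAker : A ≤ (π.ker : Submodule F T) := by
    show Submodule.span F sA ≤ _
    rw [Submodule.span_le]
    rintro z ⟨l, m, hm, rfl⟩
    have : π (h l m) = 0 := by
      rw [hπ l m]
      have hm0 : LieSubmodule.Quotient.mk (N := L2) m = 0 :=
        (LieSubmodule.Quotient.mk_eq_zero' (N := L2)).mpr hm
      rw [hm0, h2x0]
    simpa [LieSubmodule.mem_toSubmodule, LieHom.mem_ker] using this
  have hBA' : B ≤ A := by
    show Submodule.span F sB ≤ _
    rw [Submodule.span_le]
    rintro z ⟨m, l, hm, rfl⟩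
    exact hBA m hm l
  have hBker : B ≤ (π.ker : Submodule F T) := le_trans hBA' hAker
  constructor
  · exact le_antisymm hkerle (sup_le hAker hBker)
  · exact sup_eq_left.mpr hBA'
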